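/- Every λ ∈ E is an approximate eigenvalue of S acting on ℓ^∞(ℕ): there exists a sequence (u^{(k)})_{k≥0} of elements of ℓ^∞(ℕ) with ‖u^{(k)}‖_∞ = 1 for all k and lim_{k→∞} ‖S u^{(k)} − λ u^{(k)}‖_∞ = 0. In particular E is contained in the approximate point spectrum of S, hence in the spectrum of S. -/

import Mathlib

/-- Fibonacci sequence with `F 0 = 1`, `F 1 = 2`, `F (n+2) = F (n+1) + F n`. -/
def fibF : ℕ → ℕ
  | 0 => 1
  | 1 => 2
  | (n+2) => fibF (n+1) + fibF n

lemma fibF_pos : ∀ n, 0 < fibF n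
  | 0 => by simp [fibF]
  | 1 => by simp [fibF]
  | (n+2) => by
      have h1 := fibF_pos (n+1)
      simp only [fibF]
      omega

/-- Zeckendorf digits of `N` in the base `fibF`: `N = ∑ i, zeck N i * fibF i`,
with `zeck N i ∈ {0,1}` and no two consecutive `1`'s. -/
def zeck (N i : ℕ) : ℕ :=
  if h : N = 0 then 0
  else if i = Nat.findGreatest (fun j => fibF j ≤ N) N then 1
  else zeck (N - fibF (Nat.findGreatest (fun j => fibF j ≤ N) N)) i
termination_by N
decreasing_by
  exact Nat.sub_lt (Nat.pos_of_ne_zero h) (fibF_pos _)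

lemma zeck_eq_zero_of_lt : ∀ N, ∀ i, N < i → zeck N i = 0 := by
  intro N
  induction N using Nat.strong_induction_on with
  | _ N ih =>
    intro i hi
    rw [zeck]
    split
    · rfl
    · rename_i h
      have hkN : Nat.findGreatest (fun j => fibF j ≤ N) N ≤ N := Nat.findGreatest_le N
      rw [if_neg (by omega)]
      exact ih _ (Nat.sub_lt (Nat.pos_of_ne_zero h) (fibF_pos _)) i
        (lt_of_le_of_lt (Nat.sub_le _ _) hi)

lemma exists_break0 (N : ℕ) : ∃ i, ¬(zeck N (2*i+1) = 1 ∧ zeck N (2*i) = 0) := by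
  refine ⟨N + 1, ?_⟩
  have h : zeck N (2*(N+1)+1) = 0 := zeck_eq_zero_of_lt N _ (by omega)
  simp [h]

lemma exists_break1 (N : ℕ) : ∃ i, ¬(zeck N (2*i+2) = 1 ∧ zeck N (2*i+1) = 0) := by
  refine ⟨N + 1, ?_⟩
  have h : zeck N (2*(N+1)+2) = 0 := zeck_eq_zero_of_lt N _ (by omega)
  simp [h]

/-- The number `s` of `10`-blocks carried in the stochastic Fibonacci adding machine:
if the digits of `N` end with `00(10)^s` (case `ε₀ = 0`) or with `00(10)^s1`
(case `ε₀ = 1`), this returns `s`. -/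
def carryLen (N : ℕ) : ℕ :=
  if zeck N 0 = 0 then Nat.find (exists_break0 N) else Nat.find (exists_break1 N)

/-- `Pprod p t = p 1 * p 2 * ⋯ * p t`. -/
def Pprod (p : ℕ → ℝ) (t : ℕ) : ℝ := ∏ i ∈ Finset.Icc 1 t, p i

/-- The transition matrix `S` of the Fibonacci stochastic adding machine associated to
the probability sequence `p`:  `S N N = 1 - p 1`;  if the digits of `N` end with
`00(10)^s` then `S N (N+1) = p 1 ⋯ p (s+1)` and `S N (N+1-F (2m)) = p 1 ⋯ p m * (1 - p (m+1))`
for `1 ≤ m ≤ s`;  if the digits of `N` end with `00(10)^s1` then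
`S N (N+1) = p 1 ⋯ p (s+2)` and `S N (N+1-F (2m-1)) = p 1 ⋯ p m * (1 - p (m+1))` for
`1 ≤ m ≤ s+1`;  all other entries vanish. -/
noncomputable def Smat (p : ℕ → ℝ) (N M : ℕ) : ℝ :=
  (if M = N then 1 - p 1 else 0) +
  if zeck N 0 = 0 then
    (if M = N + 1 then Pprod p (carryLen N + 1) else 0) +
    ∑ m ∈ Finset.Icc 1 (carryLen N),
      (if M = N + 1 - fibF (2*m) then Pprod p m * (1 - p (m+1)) else 0)
  else
    (if M = N + 1 then Pprod p (carryLen N + 2) else 0) +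
    ∑ m ∈ Finset.Icc 1 (carryLen N + 1),
      (if M = N + 1 - fibF (2*m - 1) then Pprod p m * (1 - p (m+1)) else 0)

/-- `rr p n = r_n = p (⌊(n+1)/2⌋ + 1)`. -/
noncomputable def rr (p : ℕ → ℝ) (n : ℕ) : ℝ := p ((n+1)/2 + 1)

/-- `qF p z n = q_{F_n}(z)`. -/
noncomputable def qF (p : ℕ → ℝ) (z : ℂ) : ℕ → ℂ
  | 0 => (z - (1 - (p 1 : ℂ))) / (p 1 : ℂ)
  | 1 => (1 / (p 2 : ℂ)) * (qF p z 0) ^ 2 - (1 / (p 2 : ℂ) - 1)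
  | (n+2) => (1 / (rr p (n+2) : ℂ)) * qF p z (n+1) * qF p z n - (1 / (rr p (n+2) : ℂ) - 1)

/-- The fibered filled Julia set `E = {z : (q_{F_n}(z))ₙ is bounded}`. -/
def Eset (p : ℕ → ℝ) : Set ℂ := {z : ℂ | ∃ C : ℝ, ∀ n : ℕ, ‖qF p z n‖ ≤ C}


open Finset in
lemma fibF_strictMono : StrictMono fibF := by
  apply strictMono_nat_of_lt_succ
  intro n
  match n with
  | 0 => simp [fibF]
  | (m+1) => show fibF (m+1) < fibF (m+2); have := fibF_pos m; simp only [fibF]; omega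

lemma fibF_ge (n : ℕ) : n + 1 ≤ fibF n := by
  induction n with
  | zero => simp [fibF]
  | succ m ih =>
    have h2 : fibF m < fibF (m+1) := fibF_strictMono (by omega)
    omega

/-- the top index of the greedy algorithm -/
def ztop (N : ℕ) : ℕ := Nat.findGreatest (fun j => fibF j ≤ N) N

lemma ztop_spec {N : ℕ} (hN : N ≠ 0) :
    fibF (ztop N) ≤ N ∧ N < fibF (ztop N + 1) := by
  have hP0 : fibF 0 ≤ N := by simp only [fibF]; omega
  have h1 : fibF (ztop N) ≤ N :=
    Nat.findGreatest_spec (P := fun j => fibF j ≤ N) (Nat.zero_le N) hP0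
  refine ⟨h1, ?_⟩
  by_cases h : ztop N + 1 ≤ N
  · have h2 := Nat.findGreatest_is_greatest (P := fun j => fibF j ≤ N) (n := N)
      (Nat.lt_succ_self (ztop N)) h
    simp only [not_le] at h2
    exact h2
  · have := fibF_ge (ztop N + 1)
    omega

lemma zeck_of_ne {N : ℕ} (hN : N ≠ 0) (i : ℕ) :
    zeck N i = if i = ztop N then 1 else zeck (N - fibF (ztop N)) i := by
  rw [zeck]; simp [hN, ztop]; rfl

lemma zeck_zero (i : ℕ) : zeck 0 i = 0 := by rw [zeck]; simp

lemma zeck_le_one : ∀ N i, zeck N i ≤ 1 := by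
  intro N
  induction N using Nat.strong_induction_on with
  | _ N ih =>
    intro i
    rcases eq_or_ne N 0 with rfl | hN
    · simp [zeck_zero]
    · rw [zeck_of_ne hN]
      split
      · exact le_rfl
      · exact ih _ (Nat.sub_lt (Nat.pos_of_ne_zero hN) (fibF_pos _)) i

lemma zeck_zero_of_big : ∀ N i, N < fibF i → zeck N i = 0 := by
  intro N
  induction N using Nat.strong_induction_on with
  | _ N ih =>
    intro i hi
    rcases eq_or_ne N 0 with rfl | hN
    · simp [zeck_zero]
    · rw [zeck_of_ne hN]
      obtain ⟨h1, h2⟩ := ztop_spec hN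
      have hne : i ≠ ztop N := by rintro rfl; omega
      rw [if_neg hne]
      exact ih _ (Nat.sub_lt (Nat.pos_of_ne_zero hN) (fibF_pos _)) i
        (lt_of_le_of_lt (Nat.sub_le _ _) hi)

lemma fibF_succ_succ (t : ℕ) : fibF (t+2) = fibF (t+1) + fibF t := rfl

lemma sub_top_lt {N : ℕ} (hN : N ≠ 0) (ht : 1 ≤ ztop N) :
    N - fibF (ztop N) < fibF (ztop N - 1) := by
  obtain ⟨h1, h2⟩ := ztop_spec hN
  rcases hE : ztop N with _ | t
  · omega
  · rw [hE] at h1 h2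
    simp only [Nat.add_sub_cancel]
    have h4 : fibF (t+1+1) = fibF (t+1) + fibF t := fibF_succ_succ t
    omega

lemma zeck_noconsec : ∀ N i, ¬(zeck N i = 1 ∧ zeck N (i+1) = 1) := by
  intro N
  induction N using Nat.strong_induction_on with
  | _ N ih =>
    intro i
    rcases eq_or_ne N 0 with rfl | hN
    · simp [zeck_zero]
    · obtain ⟨h1, h2⟩ := ztop_spec hN
      have hlt : N - fibF (ztop N) < N := Nat.sub_lt (Nat.pos_of_ne_zero hN) (fibF_pos _)
      rw [zeck_of_ne hN i, zeck_of_ne hN (i+1)]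
      rcases eq_or_ne i (ztop N) with hi | hi
      · rw [if_pos hi, if_neg (by omega)]
        have hz : zeck (N - fibF (ztop N)) (i+1) = 0 := by
          apply zeck_zero_of_big
          have h3 : fibF (ztop N + 1) ≤ fibF (i + 1) :=
            fibF_strictMono.monotone (by omega)
          omega
        simp [hz]
      · rw [if_neg hi]
        rcases eq_or_ne (i+1) (ztop N) with he | hne
        · rw [if_pos he]
          have ht1 : 1 ≤ ztop N := by omega
          have hz : zeck (N - fibF (ztop N)) i = 0 := by
            apply zeck_zero_of_big
            have h3 := sub_top_lt hN ht1
            have hi' : ztop N - 1 = i := by omega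
            rwa [hi'] at h3
          simp [hz]
        · rw [if_neg hne]; exact ih _ hlt i

lemma zeck_sum : ∀ N, ∀ L, N < L → ∑ i ∈ Finset.range L, zeck N i * fibF i = N := by
  intro N
  induction N using Nat.strong_induction_on with
  | _ N ih =>
    intro L hL
    rcases eq_or_ne N 0 with rfl | hN
    · simp [zeck_zero]
    · obtain ⟨h1, h2⟩ := ztop_spec hN
      have htop : ztop N ≤ N := Nat.findGreatest_le N
      have hlt : N - fibF (ztop N) < N := Nat.sub_lt (Nat.pos_of_ne_zero hN) (fibF_pos _)
      have hz : zeck (N - fibF (ztop N)) (ztop N) = 0 := by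
        apply zeck_zero_of_big
        rcases Nat.eq_zero_or_pos (ztop N) with h0 | h0
        · rw [h0] at h2 ⊢
          have e1 : fibF 1 = 2 := rfl
          have e0 : fibF 0 = 1 := rfl
          simp only [zero_add] at h2
          omega
        · have := sub_top_lt hN h0
          have : fibF (ztop N - 1) ≤ fibF (ztop N) :=
            fibF_strictMono.monotone (by omega)
          omega
      have key : ∀ i ∈ Finset.range L, zeck N i * fibF i =
          (if i = ztop N then fibF (ztop N) else 0) + zeck (N - fibF (ztop N)) i * fibF i := by
        intro i _
        rw [zeck_of_ne hN i]
        rcases eq_or_ne i (ztop N) with rfl | hi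
        · simp [hz]
        · simp [hi]
      have hmem : ztop N ∈ Finset.range L := Finset.mem_range.2 (lt_of_le_of_lt htop hL)
      rw [Finset.sum_congr rfl key, Finset.sum_add_distrib, Finset.sum_ite_eq'
        (Finset.range L) (ztop N) (fun _ => fibF (ztop N)),
        if_pos hmem, ih _ hlt L (hlt.trans hL)]
      omega

lemma validRep_lt (ε : ℕ → ℕ) (hle : ∀ i, ε i ≤ 1) (hnc : ∀ i, ¬(ε i = 1 ∧ ε (i+1) = 1)) :
    ∀ t, ∑ i ∈ Finset.range t, ε i * fibF i < fibF t := by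
  intro t
  induction t using Nat.strong_induction_on with
  | _ t ih =>
    match t with
    | 0 => simp [fibF]
    | 1 =>
      have := hle 0
      simp only [Finset.sum_range_one, fibF]
      have : ε 0 * fibF 0 ≤ 1 := by simp only [fibF]; omega
      simp only [fibF] at this ⊢; omega
    | (t+2) =>
      rw [Finset.sum_range_succ]
      have hf : fibF (t+2) = fibF (t+1) + fibF t := rfl
      rcases Nat.lt_or_ge (ε (t+1)) 1 with h | h
      · have : ε (t+1) = 0 := by omega
        rw [this]
        have := ih (t+1) (by omega)
        have := fibF_pos t
        omega
      · have h1 : ε (t+1) = 1 := by have := hle (t+1); omega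
        have h0 : ε t = 0 := by
          have := hnc t; have := hle t; omega
        rw [Finset.sum_range_succ, h0, h1]
        have := ih t (by omega)
        omega

lemma zeck_unique : ∀ N (ε : ℕ → ℕ), (∀ i, ε i ≤ 1) → (∀ i, ¬(ε i = 1 ∧ ε (i+1) = 1)) →
    ∀ B, (∀ i, B ≤ i → ε i = 0) → (∑ i ∈ Finset.range B, ε i * fibF i = N) →
    ∀ i, zeck N i = ε i := by
  intro N
  induction N using Nat.strong_induction_on with
  | _ N ih =>
    intro ε hle hnc B hB hsum i
    rcases eq_or_ne N 0 with rfl | hN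
    · rw [zeck_zero]
      by_cases hiB : i < B
      · have h2 := Finset.sum_eq_zero_iff.1 hsum i (Finset.mem_range.2 hiB)
        rcases Nat.mul_eq_zero.1 h2 with h | h
        · omega
        · have := fibF_pos i; omega
      · exact (hB i (by omega)).symm
    · obtain ⟨h1, h2⟩ := ztop_spec hN
      -- any sum over any range ≥ stuff equals N
      have hext : ∀ C, (∀ j, C ≤ j → ε j = 0) → ∑ i ∈ Finset.range C, ε i * fibF i = N := by
        intro C hC
        rcases Nat.le_total B C with h | h
        · rw [← hsum]
          symm
          apply Finset.sum_subset (Finset.range_subset_range.2 h)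
          intro x _ hx
          rw [hB x (by simpa using hx)]; ring
        · rw [← hsum]
          apply Finset.sum_subset (Finset.range_subset_range.2 h)
          intro x _ hx
          rw [hC x (by simpa using hx)]; ring
      -- digits above ztop N vanish
      have habove : ∀ j, ztop N < j → ε j = 0 := by
        intro j hj
        by_contra hne
        have hj1 : ε j = 1 := by have := hle j; omega
        have hjB : j < B := by
          by_contra h; exact hne (hB j (by omega))
        have hle2 : ε j * fibF j ≤ N := by
          rw [← hsum]
          exact Finset.single_le_sum (f := fun i => ε i * fibF i)
            (fun i _ => Nat.zero_le _) (Finset.mem_range.2 hjB)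
        rw [hj1, one_mul] at hle2
        have : fibF (ztop N + 1) ≤ fibF j := fibF_strictMono.monotone (by omega)
        omega
      -- top digit is 1
      have htop1 : ε (ztop N) = 1 := by
        by_contra hne
        have h0 : ε (ztop N) = 0 := by have := hle (ztop N); omega
        have : ∑ i ∈ Finset.range (ztop N) , ε i * fibF i = N := by
          apply hext
          intro j hj
          rcases eq_or_ne j (ztop N) with rfl | hj'
          · exact h0
          · exact habove j (by omega)
        have := validRep_lt ε hle hnc (ztop N)
        omega
      -- the reduced digit function
      set ε' : ℕ → ℕ := fun j => if j = ztop N then 0 else ε j with hε'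
      have hle' : ∀ i, ε' i ≤ 1 := by
        intro i; simp only [hε']; split; omega; exact hle i
      have hnc' : ∀ i, ¬(ε' i = 1 ∧ ε' (i+1) = 1) := by
        intro i hcon
        apply hnc i
        obtain ⟨ha, hb⟩ := hcon
        simp only [hε'] at ha hb
        constructor
        · by_cases h : i = ztop N; simp [h] at ha; simpa [h] using ha
        · by_cases h : i + 1 = ztop N; simp [h] at hb; simpa [h] using hb
      have hB' : ∀ i, max B (ztop N + 1) ≤ i → ε' i = 0 := by
        intro i hi; simp only [hε']
        rw [if_neg (by omega)]
        exact hB i (by omega)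
      have hsum' : ∑ i ∈ Finset.range (max B (ztop N + 1)), ε' i * fibF i
          = N - fibF (ztop N) := by
        have hsplit : ∀ i ∈ Finset.range (max B (ztop N + 1)), ε i * fibF i =
            (if i = ztop N then fibF (ztop N) else 0) + ε' i * fibF i := by
          intro i _
          simp only [hε']
          rcases eq_or_ne i (ztop N) with rfl | hi
          · simp [htop1]
          · simp [hi]
        have hN' := hext (max B (ztop N + 1)) (fun j hj => hB j (by omega))
        have hmem : ztop N ∈ Finset.range (max B (ztop N + 1)) :=
          Finset.mem_range.2 (by omega)
        rw [Finset.sum_congr rfl hsplit, Finset.sum_add_distrib, Finset.sum_ite_eq'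
          (Finset.range _) (ztop N) (fun _ => fibF (ztop N)),
          if_pos hmem] at hN'
        omega
      have hlt : N - fibF (ztop N) < N := Nat.sub_lt (Nat.pos_of_ne_zero hN) (fibF_pos _)
      have hrec := ih _ hlt ε' hle' hnc' _ hB' hsum'
      rw [zeck_of_ne hN i]
      rcases eq_or_ne i (ztop N) with rfl | hi
      · rw [if_pos rfl, htop1]
      · rw [if_neg hi, hrec i, hε']
        simp [hi]

/-! ### Pattern lemmas for `carryLen` -/

lemma pattern0 {N : ℕ} (h0 : zeck N 0 = 0) :
    (∀ j < carryLen N, zeck N (2*j+1) = 1 ∧ zeck N (2*j) = 0) ∧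
      zeck N (2*(carryLen N)) = 0 ∧ zeck N (2*(carryLen N)+1) = 0 := by
  have hc : carryLen N = Nat.find (exists_break0 N) := by rw [carryLen, if_pos h0]
  have hmin : ∀ j < carryLen N, zeck N (2*j+1) = 1 ∧ zeck N (2*j) = 0 := by
    intro j hj
    rw [hc] at hj
    have := Nat.find_min (exists_break0 N) hj
    exact not_not.1 this
  have hbreak : ¬(zeck N (2*(carryLen N)+1) = 1 ∧ zeck N (2*(carryLen N)) = 0) := by
    rw [hc]; exact Nat.find_spec (exists_break0 N)
  have heven : zeck N (2*(carryLen N)) = 0 := by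
    rcases Nat.eq_zero_or_pos (carryLen N) with h | h
    · rw [h]; simpa using h0
    · obtain ⟨j, hj⟩ : ∃ j, carryLen N = j + 1 := ⟨carryLen N - 1, by omega⟩
      have h1 := (hmin j (by omega)).1
      have hnc := zeck_noconsec N (2*j+1)
      have e0 : 2*j+1+1 = 2*j+2 := by omega
      rw [e0] at hnc
      have := zeck_le_one N (2*j+2)
      have e : 2*(carryLen N) = 2*j+2 := by omega
      rw [e]; omega
  refine ⟨hmin, heven, ?_⟩
  have := zeck_le_one N (2*(carryLen N)+1)
  omega

lemma pattern1 {N : ℕ} (h0 : ¬ zeck N 0 = 0) :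
    zeck N 0 = 1 ∧
    (∀ j < carryLen N, zeck N (2*j+2) = 1 ∧ zeck N (2*j+1) = 0) ∧
      zeck N (2*(carryLen N)+1) = 0 ∧ zeck N (2*(carryLen N)+2) = 0 := by
  have hz0 : zeck N 0 = 1 := by have := zeck_le_one N 0; omega
  have hc : carryLen N = Nat.find (exists_break1 N) := by rw [carryLen, if_neg h0]
  have hmin : ∀ j < carryLen N, zeck N (2*j+2) = 1 ∧ zeck N (2*j+1) = 0 := by
    intro j hj
    rw [hc] at hj
    have := Nat.find_min (exists_break1 N) hj
    exact not_not.1 this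
  have hbreak : ¬(zeck N (2*(carryLen N)+2) = 1 ∧ zeck N (2*(carryLen N)+1) = 0) := by
    rw [hc]; exact Nat.find_spec (exists_break1 N)
  have hodd : zeck N (2*(carryLen N)+1) = 0 := by
    rcases Nat.eq_zero_or_pos (carryLen N) with h | h
    · rw [h]
      have hnc : ¬(zeck N 0 = 1 ∧ zeck N 1 = 1) := by
        have h2 := zeck_noconsec N 0
        simpa using h2
      have := zeck_le_one N 1
      show zeck N (2*0+1) = 0
      norm_num
      omega
    · obtain ⟨j, hj⟩ : ∃ j, carryLen N = j + 1 := ⟨carryLen N - 1, by omega⟩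
      have h1 := (hmin j (by omega)).1
      have hnc := zeck_noconsec N (2*j+2)
      have e0 : 2*j+2+1 = 2*j+3 := by omega
      rw [e0] at hnc
      have := zeck_le_one N (2*j+3)
      have e : 2*(carryLen N)+1 = 2*j+3 := by omega
      rw [e]; omega
  refine ⟨hz0, hmin, hodd, ?_⟩
  have := zeck_le_one N (2*(carryLen N)+2)
  omega

/-! ### pair-splitting of sums and products over `range (2*s)` -/

lemma sum_pair (f : ℕ → ℕ) (s : ℕ) :
    ∑ i ∈ Finset.range (2*s), f i = ∑ j ∈ Finset.range s, (f (2*j) + f (2*j+1)) := by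
  induction s with
  | zero => simp
  | succ s ih =>
    have e : 2*(s+1) = (2*s+1)+1 := by ring
    rw [e, Finset.sum_range_succ, Finset.sum_range_succ, ih, Finset.sum_range_succ]
    ring

lemma prod_pair (f : ℕ → ℂ) (s : ℕ) :
    ∏ i ∈ Finset.range (2*s), f i = ∏ j ∈ Finset.range s, (f (2*j) * f (2*j+1)) := by
  induction s with
  | zero => simp
  | succ s ih =>
    have e : 2*(s+1) = (2*s+1)+1 := by ring
    rw [e, Finset.prod_range_succ, Finset.prod_range_succ, ih, Finset.prod_range_succ]
    ring

lemma prod_pair_Ico (f : ℕ → ℂ) (m d : ℕ) :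
    ∏ i ∈ Finset.Ico (2*m) (2*(m+d)), f i
      = ∏ j ∈ Finset.Ico m (m+d), (f (2*j) * f (2*j+1)) := by
  induction d with
  | zero => simp
  | succ d ih =>
    have e1 : 2*(m+(d+1)) = (2*(m+d)+1)+1 := by ring
    have e2 : m+(d+1) = (m+d)+1 := by ring
    rw [e1, e2, Finset.prod_Ico_succ_top (by omega), Finset.prod_Ico_succ_top (by omega),
      Finset.prod_Ico_succ_top (by omega), ← ih]
    ring

/-! ### Fibonacci partial-sum identities -/

lemma fib_odd_sum (s : ℕ) : 1 + ∑ j ∈ Finset.range s, fibF (2*j+1) = fibF (2*s) := by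
  induction s with
  | zero => simp [fibF]
  | succ s ih =>
    rw [Finset.sum_range_succ, ← add_assoc, ih]
    have : fibF (2*(s+1)) = fibF (2*s+1) + fibF (2*s) := by
      have e : 2*(s+1) = (2*s)+2 := by ring
      rw [e]; exact fibF_succ_succ _
    omega

lemma fib_even_sum (s : ℕ) : 1 + ∑ j ∈ Finset.range (s+1), fibF (2*j) = fibF (2*s+1) := by
  induction s with
  | zero => simp [fibF]
  | succ s ih =>
    rw [Finset.sum_range_succ, ← add_assoc, ih]
    have e3 : 2*(s+1)+1 = (2*s+1)+2 := by ring
    have e2 : 2*(s+1) = 2*s+1+1 := by ring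
    rw [e3, e2]
    have h3 := fibF_succ_succ (2*s+1)
    omega

/-- digits of `fibF k` -/
lemma zeck_fibF (k : ℕ) : ∀ i, zeck (fibF k) i = if i = k then 1 else 0 := by
  apply zeck_unique (fibF k) (fun i => if i = k then 1 else 0) ?_ ?_ (k+1) ?_ ?_
  · intro i
    show (if i = k then 1 else 0) ≤ 1
    split <;> omega
  · intro i
    show ¬((if i = k then 1 else 0) = 1 ∧ (if i+1 = k then 1 else 0) = 1)
    rcases eq_or_ne i k with rfl | h
    · simp
    · simp [h]
  · intro i hi
    show (if i = k then 1 else 0) = 0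
    rw [if_neg (by omega)]
  · show ∑ i ∈ Finset.range (k+1), (if i = k then 1 else 0) * fibF i = fibF k
    have hcg : ∀ i ∈ Finset.range (k+1),
        (if i = k then 1 else 0) * fibF i = (if i = k then fibF k else 0) := by
      intro i _
      rcases eq_or_ne i k with rfl | h
      · simp
      · simp [h]
    rw [Finset.sum_congr rfl hcg,
      Finset.sum_ite_eq' (Finset.range (k+1)) k (fun _ => fibF k),
      if_pos (Finset.mem_range.2 (by omega))]

/-! ### Pprod and qF recursion facts -/

lemma Pprod_zero (p : ℕ → ℝ) : Pprod p 0 = 1 := by simp [Pprod]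

lemma Pprod_one (p : ℕ → ℝ) : Pprod p 1 = p 1 := by simp [Pprod]

lemma Pprod_succ (p : ℕ → ℝ) (t : ℕ) : Pprod p (t+1) = Pprod p t * p (t+1) := by
  rw [Pprod, Pprod, Finset.prod_Icc_succ_top (by omega)]

lemma Pprod_nonneg {p : ℕ → ℝ} (hp : ∀ i, 1 ≤ i → 0 < p i ∧ p i ≤ 1) (t : ℕ) :
    0 ≤ Pprod p t :=
  Finset.prod_nonneg (fun i hi => le_of_lt (hp i (Finset.mem_Icc.1 hi).1).1)

lemma Pprod_le_one {p : ℕ → ℝ} (hp : ∀ i, 1 ≤ i → 0 < p i ∧ p i ≤ 1) (t : ℕ) :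
    Pprod p t ≤ 1 :=
  Finset.prod_le_one (fun i hi => le_of_lt (hp i (Finset.mem_Icc.1 hi).1).1)
    (fun i hi => (hp i (Finset.mem_Icc.1 hi).1).2)

section
variable (p : ℕ → ℝ) (lam : ℂ)

lemma rr_even (s : ℕ) : rr p (2*s+2) = p (s+2) := by
  rw [rr]; congr 1; omega

lemma rr_odd (s : ℕ) : rr p (2*s+3) = p (s+3) := by
  rw [rr]; congr 1; omega

lemma qF_even_rec {s : ℕ} (hps : p (s+2) ≠ 0) :
    ((p (s+2) : ℝ) : ℂ) * qF p lam (2*s+2) =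
      qF p lam (2*s+1) * qF p lam (2*s) - (1 - ((p (s+2):ℝ) : ℂ)) := by
  have hc : ((p (s+2):ℝ) : ℂ) ≠ 0 := Complex.ofReal_ne_zero.mpr hps
  have e : 2*s+2 = (2*s)+2 := by ring
  rw [e]
  conv_lhs => rw [qF]
  rw [show (2*s)+2 = 2*s+2 from rfl, rr_even p s]
  field_simp

lemma qF_odd_rec {s : ℕ} (hps : p (s+3) ≠ 0) :
    ((p (s+3) : ℝ) : ℂ) * qF p lam (2*s+3) =
      qF p lam (2*s+2) * qF p lam (2*s+1) - (1 - ((p (s+3):ℝ) : ℂ)) := by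
  have hc : ((p (s+3):ℝ) : ℂ) ≠ 0 := Complex.ofReal_ne_zero.mpr hps
  have e : 2*s+3 = (2*s+1)+2 := by ring
  rw [e]
  conv_lhs => rw [qF]
  rw [show (2*s+1)+2 = 2*s+3 from rfl, rr_odd p s]
  rw [show (2*s+1)+1 = 2*s+2 from rfl]
  field_simp

lemma qF_one_rec (hps : p 2 ≠ 0) :
    ((p 2 : ℝ) : ℂ) * qF p lam 1 = (qF p lam 0)^2 - (1 - ((p 2:ℝ) : ℂ)) := by
  have hc : ((p 2:ℝ) : ℂ) ≠ 0 := Complex.ofReal_ne_zero.mpr hps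
  conv_lhs => rw [qF]
  field_simp

variable (hp : ∀ i, 1 ≤ i → 0 < p i ∧ p i ≤ 1)
include hp

/-- key identity for rows ending in `00(10)^s` -/
lemma identH (s : ℕ) :
    ((p 1 : ℝ):ℂ) * qF p lam 0 * ∏ j ∈ Finset.range s, qF p lam (2*j+1)
      = (∑ m ∈ Finset.Icc 1 s, ((Pprod p m * (1 - p (m+1)) : ℝ) : ℂ) *
          ∏ j ∈ Finset.Ico m s, qF p lam (2*j+1))
        + ((Pprod p (s+1) : ℝ):ℂ) * qF p lam (2*s) := by
  induction s with
  | zero =>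
    simp [Pprod_one]
  | succ s ih =>
    have hps : p (s+2) ≠ 0 := ne_of_gt (hp (s+2) (by omega)).1
    have hrec := qF_even_rec p lam hps
    have hPs : (Pprod p (s+2) : ℝ) = Pprod p (s+1) * p (s+2) := Pprod_succ p (s+1)
    have hsum : ∑ m ∈ Finset.Icc 1 (s+1), ((Pprod p m * (1 - p (m+1)) : ℝ) : ℂ) *
          ∏ j ∈ Finset.Ico m (s+1), qF p lam (2*j+1)
        = (∑ m ∈ Finset.Icc 1 s, ((Pprod p m * (1 - p (m+1)) : ℝ) : ℂ) *
            ∏ j ∈ Finset.Ico m s, qF p lam (2*j+1)) * qF p lam (2*s+1)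
          + ((Pprod p (s+1) * (1 - p (s+2)) : ℝ) : ℂ) := by
      rw [Finset.sum_Icc_succ_top (by omega), Finset.sum_mul]
      congr 1
      · apply Finset.sum_congr rfl
        intro m hm
        obtain ⟨hm1, hm2⟩ := Finset.mem_Icc.1 hm
        rw [Finset.prod_Ico_succ_top (by omega)]
        ring
      · rw [Finset.Ico_self, Finset.prod_empty, mul_one]
    rw [Finset.prod_range_succ, hsum]
    rw [show 2*(s+1) = 2*s+2 from by ring, show Pprod p (s+1+1) = Pprod p (s+2) from rfl]
    push_cast [hPs]
    push_cast at ih hrec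
    calc (p 1:ℂ) * qF p lam 0 * ((∏ j ∈ Finset.range s, qF p lam (2*j+1)) * qF p lam (2*s+1))
        = ((p 1:ℂ) * qF p lam 0 * ∏ j ∈ Finset.range s, qF p lam (2*j+1)) * qF p lam (2*s+1) := by
          ring
      _ = ((∑ m ∈ Finset.Icc 1 s, ((Pprod p m:ℂ) * (1 - (p (m+1):ℂ))) *
            ∏ j ∈ Finset.Ico m s, qF p lam (2*j+1))
          + (Pprod p (s+1):ℂ) * qF p lam (2*s)) * qF p lam (2*s+1) := by rw [ih]
      _ = (∑ m ∈ Finset.Icc 1 s, ((Pprod p m:ℂ) * (1 - (p (m+1):ℂ))) *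
            ∏ j ∈ Finset.Ico m s, qF p lam (2*j+1)) * qF p lam (2*s+1)
          + (Pprod p (s+1):ℂ) * (qF p lam (2*s+1) * qF p lam (2*s)) := by ring
      _ = (∑ m ∈ Finset.Icc 1 s, ((Pprod p m:ℂ) * (1 - (p (m+1):ℂ))) *
            ∏ j ∈ Finset.Ico m s, qF p lam (2*j+1)) * qF p lam (2*s+1)
          + (Pprod p (s+1):ℂ) * ((p (s+2):ℂ) * qF p lam (2*s+2) + (1 - (p (s+2):ℂ))) := by
            rw [hrec]; ring
      _ = _ := by ring

/-- key identity for rows ending in `00(10)^s1` -/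
lemma identG (s : ℕ) :
    ((p 1 : ℝ):ℂ) * qF p lam 0 * (qF p lam 0 * ∏ j ∈ Finset.Icc 1 s, qF p lam (2*j))
      = (∑ m ∈ Finset.Icc 1 (s+1), ((Pprod p m * (1 - p (m+1)) : ℝ) : ℂ) *
          ∏ j ∈ Finset.Icc m s, qF p lam (2*j))
        + ((Pprod p (s+2) : ℝ):ℂ) * qF p lam (2*s+1) := by
  induction s with
  | zero =>
    have hps : p 2 ≠ 0 := ne_of_gt (hp 2 (by omega)).1
    have hrec := qF_one_rec p lam hps
    have h1 : Pprod p 2 = p 1 * p 2 := by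
      rw [show (2:ℕ) = 1+1 from rfl, Pprod_succ, Pprod_one]
    rw [show (0:ℕ)+1 = 1 from rfl, show (0:ℕ)+2 = 2 from rfl,
      Finset.Icc_self, Finset.sum_singleton,
      Finset.Icc_eq_empty (by omega : ¬ (1:ℕ) ≤ 0), Finset.prod_empty]
    rw [show (1:ℕ)+1 = 2 from rfl, Pprod_one, h1]
    push_cast
    push_cast at hrec
    linear_combination (-((p 1:ℝ):ℂ)) * hrec
  | succ s ih =>
    have hps : p (s+3) ≠ 0 := ne_of_gt (hp (s+3) (by omega)).1
    have hrec := qF_odd_rec p lam hps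
    have hPs : (Pprod p (s+3) : ℝ) = Pprod p (s+2) * p (s+3) := Pprod_succ p (s+2)
    have hsum : ∑ m ∈ Finset.Icc 1 (s+2), ((Pprod p m * (1 - p (m+1)) : ℝ) : ℂ) *
          ∏ j ∈ Finset.Icc m (s+1), qF p lam (2*j)
        = (∑ m ∈ Finset.Icc 1 (s+1), ((Pprod p m * (1 - p (m+1)) : ℝ) : ℂ) *
            ∏ j ∈ Finset.Icc m s, qF p lam (2*j)) * qF p lam (2*(s+1))
          + ((Pprod p (s+2) * (1 - p (s+3)) : ℝ) : ℂ) := by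
      rw [Finset.sum_Icc_succ_top (by omega), Finset.sum_mul]
      congr 1
      · apply Finset.sum_congr rfl
        intro m hm
        obtain ⟨hm1, hm2⟩ := Finset.mem_Icc.1 hm
        rw [show Finset.Icc m (s+1) = Finset.Ico m (s+2) from rfl,
          Finset.prod_Ico_succ_top (by omega),
          show Finset.Ico m (s+1) = Finset.Icc m s from rfl]
        ring
      · rw [Finset.Icc_eq_empty (by omega : ¬ (s+2) ≤ (s+1)), Finset.prod_empty, mul_one]
    rw [Finset.prod_Icc_succ_top (by omega : 1 ≤ s+1), hsum]
    rw [show 2*(s+1)+1 = 2*s+3 from by ring, show 2*(s+1) = 2*s+2 from by ring,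
      show Pprod p (s+1+2) = Pprod p (s+3) from rfl]
    push_cast [hPs]
    push_cast at ih hrec
    calc (p 1:ℂ) * qF p lam 0 *
          (qF p lam 0 * ((∏ j ∈ Finset.Icc 1 s, qF p lam (2*j)) * qF p lam (2*s+2)))
        = ((p 1:ℂ) * qF p lam 0 *
            (qF p lam 0 * ∏ j ∈ Finset.Icc 1 s, qF p lam (2*j))) * qF p lam (2*s+2) := by
          ring
      _ = ((∑ m ∈ Finset.Icc 1 (s+1), ((Pprod p m:ℂ) * (1 - (p (m+1):ℂ))) *
            ∏ j ∈ Finset.Icc m s, qF p lam (2*j))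
          + (Pprod p (s+2):ℂ) * qF p lam (2*s+1)) * qF p lam (2*s+2) := by rw [ih]
      _ = (∑ m ∈ Finset.Icc 1 (s+1), ((Pprod p m:ℂ) * (1 - (p (m+1):ℂ))) *
            ∏ j ∈ Finset.Icc m s, qF p lam (2*j)) * qF p lam (2*s+2)
          + (Pprod p (s+2):ℂ) * (qF p lam (2*s+2) * qF p lam (2*s+1)) := by ring
      _ = (∑ m ∈ Finset.Icc 1 (s+1), ((Pprod p m:ℂ) * (1 - (p (m+1):ℂ))) *
            ∏ j ∈ Finset.Icc m s, qF p lam (2*j)) * qF p lam (2*s+2)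
          + (Pprod p (s+2):ℂ) * ((p (s+3):ℂ) * qF p lam (2*s+3) + (1 - (p (s+3):ℂ))) := by
            rw [hrec]; ring
      _ = _ := by ring

end

section
variable (p : ℕ → ℝ) (lam : ℂ)

/-- the (possibly unbounded) eigenvector candidate -/
noncomputable def vv (N : ℕ) : ℂ := ∏ i ∈ Finset.range (N+1), qF p lam i ^ zeck N i

lemma vv_ext {N L : ℕ} (h : N < L) :
    vv p lam N = ∏ i ∈ Finset.range L, qF p lam i ^ zeck N i := by
  rw [vv]
  apply Finset.prod_subset (Finset.range_subset_range.2 (by omega))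
  intro x hx hnx
  simp only [Finset.mem_range] at hx hnx
  rw [zeck_eq_zero_of_lt N x (by omega), pow_zero]

lemma vv_zero' : vv p lam 0 = 1 := by
  simp [vv, zeck_zero]

lemma vv_fibF (k : ℕ) : vv p lam (fibF k) = qF p lam k := by
  have hk : k < fibF k + 1 := by have := fibF_ge k; omega
  rw [vv]
  rw [Finset.prod_congr rfl (fun i _ => by rw [zeck_fibF k i])]
  have hcg : ∀ i ∈ Finset.range (fibF k + 1),
      qF p lam i ^ (if i = k then 1 else 0) = (if i = k then qF p lam i else 1) := by
    intro i _
    split <;> simp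
  rw [Finset.prod_congr rfl hcg,
    Finset.prod_ite_eq' (Finset.range (fibF k + 1)) k (qF p lam),
    if_pos (Finset.mem_range.2 hk)]

lemma lam_eq (hp1 : p 1 ≠ 0) : lam = (1 - ((p 1:ℝ):ℂ)) + ((p 1:ℝ):ℂ) * qF p lam 0 := by
  have hc : ((p 1:ℝ):ℂ) ≠ 0 := Complex.ofReal_ne_zero.mpr hp1
  rw [qF]
  field_simp; ring

variable (hp : ∀ i, 1 ≤ i → 0 < p i ∧ p i ≤ 1)
include hp

/-- exact eigen-identity for rows whose digits end with `00(10)^s` -/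
lemma row_eq0 {N : ℕ} (h0 : zeck N 0 = 0) :
    ((1 - p 1 :ℝ):ℂ) * vv p lam N
      + ((Pprod p (carryLen N + 1):ℝ):ℂ) * vv p lam (N+1)
      + ∑ m ∈ Finset.Icc 1 (carryLen N),
          ((Pprod p m * (1 - p (m+1)):ℝ):ℂ) * vv p lam (N+1-fibF (2*m))
    = lam * vv p lam N := by
  obtain ⟨hpat, he, ho⟩ := pattern0 h0
  set s := carryLen N with hs
  set L := N + 2*s + 3 with hLdef
  -- partial digit sums below position 2m
  have hlow : ∀ m, m ≤ s →
      (∑ i ∈ Finset.range (2*m), zeck N i * fibF i) + 1 = fibF (2*m) := by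
    intro m hm
    have h1 : ∑ i ∈ Finset.range (2*m), zeck N i * fibF i
        = ∑ j ∈ Finset.range m, fibF (2*j+1) := by
      rw [sum_pair]
      apply Finset.sum_congr rfl
      intro j hj
      have hj' : j < s := lt_of_lt_of_le (Finset.mem_range.1 hj) hm
      rw [(hpat j hj').1, (hpat j hj').2]
      ring
    rw [h1, add_comm]
    exact fib_odd_sum m
  have hsplit : ∀ a, a ≤ L →
      (∑ i ∈ Finset.range a, zeck N i * fibF i)
        + (∑ i ∈ Finset.Ico a L, zeck N i * fibF i) = N := by
    intro a ha
    rw [Finset.sum_range_add_sum_Ico _ ha]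
    exact zeck_sum N L (by omega)
  have h2s1 : (∑ i ∈ Finset.range (2*s+1), zeck N i * fibF i) + 1 = fibF (2*s) := by
    rw [Finset.sum_range_succ, he, zero_mul, add_zero]
    exact hlow s le_rfl
  -- digits of N+1
  have hfwd : ∀ i, zeck (N+1) i =
      if i < 2*s then 0 else if i = 2*s then 1 else zeck N i := by
    apply zeck_unique (N+1)
      (fun i => if i < 2*s then 0 else if i = 2*s then 1 else zeck N i) ?_ ?_ L ?_ ?_
    · intro i
      split
      · omega
      · split
        · omega
        · exact zeck_le_one N i
    · intro i
      by_cases h1 : i < 2*s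
      · simp [h1]
      · rw [if_neg h1]
        by_cases h2 : i = 2*s
        · rw [if_pos h2, if_neg (by omega), if_neg (by omega)]
          have hz : zeck N (i+1) = 0 := by rw [show i+1 = 2*s+1 by omega]; exact ho
          omega
        · rw [if_neg h2, if_neg (by omega), if_neg (by omega)]
          exact zeck_noconsec N i
    · intro i hi
      rw [if_neg (by omega), if_neg (by omega)]
      exact zeck_eq_zero_of_lt N i (by omega)
    · show ∑ i ∈ Finset.range L,
        (if i < 2*s then 0 else if i = 2*s then 1 else zeck N i) * fibF i = N+1
      rw [← Finset.sum_range_add_sum_Ico _ (show 2*s+1 ≤ L by omega)]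
      have hlo : ∑ i ∈ Finset.range (2*s+1),
          (if i < 2*s then 0 else if i = 2*s then 1 else zeck N i) * fibF i
          = fibF (2*s) := by
        rw [Finset.sum_range_succ,
          Finset.sum_eq_zero (fun i hi => by
            rw [if_pos (Finset.mem_range.1 hi), zero_mul]),
          if_neg (by omega), if_pos rfl, zero_add, one_mul]
      have hhi : ∑ i ∈ Finset.Ico (2*s+1) L,
          (if i < 2*s then 0 else if i = 2*s then 1 else zeck N i) * fibF i
          = ∑ i ∈ Finset.Ico (2*s+1) L, zeck N i * fibF i := by
        apply Finset.sum_congr rfl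
        intro i hi
        have := (Finset.mem_Ico.1 hi).1
        rw [if_neg (by omega), if_neg (by omega)]
      rw [hlo, hhi]
      have := hsplit (2*s+1) (by omega)
      omega
  -- digits of the backward targets
  have hback : ∀ m, 1 ≤ m → m ≤ s →
      ∀ i, zeck (N+1-fibF (2*m)) i = if i < 2*m then 0 else zeck N i := by
    intro m hm1 hm2
    apply zeck_unique (N+1-fibF (2*m)) (fun i => if i < 2*m then 0 else zeck N i) ?_ ?_ L ?_ ?_
    · intro i
      split
      · omega
      · exact zeck_le_one N i
    · intro i
      by_cases h1 : i < 2*m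
      · simp [h1]
      · rw [if_neg h1, if_neg (by omega)]
        exact zeck_noconsec N i
    · intro i hi
      rw [if_neg (by omega)]
      exact zeck_eq_zero_of_lt N i (by omega)
    · show ∑ i ∈ Finset.range L,
        (if i < 2*m then 0 else zeck N i) * fibF i = N+1-fibF (2*m)
      rw [← Finset.sum_range_add_sum_Ico _ (show 2*m ≤ L by omega)]
      rw [Finset.sum_eq_zero (fun i hi => by
        rw [if_pos (Finset.mem_range.1 hi), zero_mul]), zero_add]
      rw [Finset.sum_congr rfl (fun i hi => by
        rw [if_neg (by have := (Finset.mem_Ico.1 hi).1; omega)])]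
      have := hsplit (2*m) (by omega)
      have := hlow m hm2
      omega
  -- product decompositions
  set W := ∏ i ∈ Finset.Ico (2*s+1) L, qF p lam i ^ zeck N i with hW
  have hvN : vv p lam N = (∏ j ∈ Finset.range s, qF p lam (2*j+1)) * W := by
    rw [vv_ext p lam (show N < L by omega),
      ← Finset.prod_range_mul_prod_Ico _ (show 2*s+1 ≤ L by omega)]
    congr 1
    rw [Finset.prod_range_succ, he, pow_zero, mul_one, prod_pair]
    apply Finset.prod_congr rfl
    intro j hj
    rw [(hpat j (Finset.mem_range.1 hj)).1, (hpat j (Finset.mem_range.1 hj)).2,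
      pow_zero, pow_one, one_mul]
  have hvfwd : vv p lam (N+1) = qF p lam (2*s) * W := by
    rw [vv_ext p lam (show N+1 < L by omega),
      ← Finset.prod_range_mul_prod_Ico _ (show 2*s+1 ≤ L by omega)]
    congr 1
    · rw [Finset.prod_congr rfl (fun i _ => by rw [hfwd i]), Finset.prod_range_succ,
        Finset.prod_eq_one (fun i hi => by
          rw [if_pos (Finset.mem_range.1 hi), pow_zero]),
        if_neg (by omega), if_pos rfl, pow_one, one_mul]
    · apply Finset.prod_congr rfl
      intro i hi
      have := (Finset.mem_Ico.1 hi).1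
      rw [hfwd i, if_neg (by omega), if_neg (by omega)]
  have hvback : ∀ m, 1 ≤ m → m ≤ s →
      vv p lam (N+1-fibF (2*m)) = (∏ j ∈ Finset.Ico m s, qF p lam (2*j+1)) * W := by
    intro m hm1 hm2
    rw [vv_ext p lam (show N+1-fibF (2*m) < L by omega),
      ← Finset.prod_range_mul_prod_Ico _ (show 2*s+1 ≤ L by omega)]
    congr 1
    · rw [Finset.prod_congr rfl (fun i _ => by rw [hback m hm1 hm2 i]),
        ← Finset.prod_range_mul_prod_Ico _ (show 2*m ≤ 2*s+1 by omega),
        Finset.prod_eq_one (fun i hi => by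
          rw [if_pos (Finset.mem_range.1 hi), pow_zero]), one_mul,
        show 2*s+1 = (2*s)+1 from rfl,
        Finset.prod_Ico_succ_top (by omega), if_neg (by omega), he, pow_zero, mul_one,
        show 2*s = 2*(m+(s-m)) by omega, prod_pair_Ico, show m+(s-m) = s by omega]
      apply Finset.prod_congr rfl
      intro j hj
      obtain ⟨hj1, hj2⟩ := Finset.mem_Ico.1 hj
      rw [if_neg (by omega), if_neg (by omega),
        (hpat j hj2).1, (hpat j hj2).2, pow_zero, pow_one, one_mul]
    · apply Finset.prod_congr rfl
      intro i hi
      have := (Finset.mem_Ico.1 hi).1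
      rw [hback m hm1 hm2 i, if_neg (by omega)]
  -- assemble
  have hp1 : p 1 ≠ 0 := ne_of_gt (hp 1 le_rfl).1
  have hlam := lam_eq p lam hp1
  have hH := identH p lam hp s
  rw [hvN, hvfwd,
    Finset.sum_congr rfl (fun m hm => by
      rw [hvback m (Finset.mem_Icc.1 hm).1 (Finset.mem_Icc.1 hm).2])]
  have hsum2 : ∑ m ∈ Finset.Icc 1 s, ((Pprod p m * (1 - p (m+1)):ℝ):ℂ) *
        ((∏ j ∈ Finset.Ico m s, qF p lam (2*j+1)) * W)
      = (∑ m ∈ Finset.Icc 1 s, ((Pprod p m * (1 - p (m+1)):ℝ):ℂ) *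
          ∏ j ∈ Finset.Ico m s, qF p lam (2*j+1)) * W := by
    rw [Finset.sum_mul]
    apply Finset.sum_congr rfl
    intro m _
    ring
  rw [hsum2]
  push_cast at hH ⊢
  linear_combination (-((∏ j ∈ Finset.range s, qF p lam (2*j+1)) * W)) * hlam - W * hH

/-- exact eigen-identity for rows whose digits end with `00(10)^s1` -/
lemma row_eq1 {N : ℕ} (h0 : ¬ zeck N 0 = 0) :
    ((1 - p 1 :ℝ):ℂ) * vv p lam N
      + ((Pprod p (carryLen N + 2):ℝ):ℂ) * vv p lam (N+1)
      + ∑ m ∈ Finset.Icc 1 (carryLen N + 1),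
          ((Pprod p m * (1 - p (m+1)):ℝ):ℂ) * vv p lam (N+1-fibF (2*m-1))
    = lam * vv p lam N := by
  obtain ⟨hz0, hpat, ho, he⟩ := pattern1 h0
  set s := carryLen N with hs
  set L := N + 2*s + 4 with hLdef
  -- even positions ≤ 2s carry digit 1
  have heven : ∀ j, j ≤ s → zeck N (2*j) = 1 := by
    intro j hj
    rcases Nat.eq_zero_or_pos j with rfl | hjpos
    · simpa using hz0
    · have := (hpat (j-1) (by omega)).1
      rw [show 2*(j-1)+2 = 2*j by omega] at this
      exact this
  have hodd : ∀ j, j ≤ s → zeck N (2*j+1) = 0 := by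
    intro j hj
    rcases eq_or_ne j s with rfl | hne
    · exact ho
    · exact (hpat j (by omega)).2
  -- partial digit sums below odd position 2m-1
  have hlow : ∀ m, 1 ≤ m → m ≤ s+1 →
      (∑ i ∈ Finset.range (2*m-1), zeck N i * fibF i) + 1 = fibF (2*m-1) := by
    intro m hm1 hm2
    obtain ⟨m', rfl⟩ : ∃ m', m = m' + 1 := ⟨m-1, by omega⟩
    rw [show 2*(m'+1)-1 = 2*m'+1 by omega, Finset.sum_range_succ, sum_pair]
    have h1 : ∀ j ∈ Finset.range m',
        zeck N (2*j) * fibF (2*j) + zeck N (2*j+1) * fibF (2*j+1) = fibF (2*j) := by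
      intro j hj
      have hj' : j < m' := Finset.mem_range.1 hj
      rw [heven j (by omega), hodd j (by omega)]
      ring
    rw [Finset.sum_congr rfl h1, heven m' (by omega), one_mul]
    have h2 := fib_even_sum m'
    rw [Finset.sum_range_succ] at h2
    omega
  have hsplit : ∀ a, a ≤ L →
      (∑ i ∈ Finset.range a, zeck N i * fibF i)
        + (∑ i ∈ Finset.Ico a L, zeck N i * fibF i) = N := by
    intro a ha
    rw [Finset.sum_range_add_sum_Ico _ ha]
    exact zeck_sum N L (by omega)
  have h2s2 : (∑ i ∈ Finset.range (2*s+2), zeck N i * fibF i) + 1 = fibF (2*s+1) := by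
    rw [show (2*s+2 : ℕ) = (2*s+1)+1 from rfl, Finset.sum_range_succ, hodd s le_rfl,
      zero_mul, add_zero]
    have h3 := hlow (s+1) (by omega) (by omega)
    rw [show 2*(s+1)-1 = 2*s+1 by omega] at h3
    exact h3
  -- digits of N+1
  have hfwd : ∀ i, zeck (N+1) i =
      if i < 2*s+1 then 0 else if i = 2*s+1 then 1 else zeck N i := by
    apply zeck_unique (N+1)
      (fun i => if i < 2*s+1 then 0 else if i = 2*s+1 then 1 else zeck N i) ?_ ?_ L ?_ ?_
    · intro i
      split
      · omega
      · split
        · omega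
        · exact zeck_le_one N i
    · intro i
      by_cases h1 : i < 2*s+1
      · simp [h1]
      · rw [if_neg h1]
        by_cases h2 : i = 2*s+1
        · rw [if_pos h2, if_neg (by omega), if_neg (by omega)]
          have hz : zeck N (i+1) = 0 := by rw [show i+1 = 2*s+2 by omega]; exact he
          omega
        · rw [if_neg h2, if_neg (by omega), if_neg (by omega)]
          exact zeck_noconsec N i
    · intro i hi
      rw [if_neg (by omega), if_neg (by omega)]
      exact zeck_eq_zero_of_lt N i (by omega)
    · show ∑ i ∈ Finset.range L,
        (if i < 2*s+1 then 0 else if i = 2*s+1 then 1 else zeck N i) * fibF i = N+1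
      rw [← Finset.sum_range_add_sum_Ico _ (show 2*s+2 ≤ L by omega)]
      have hlo : ∑ i ∈ Finset.range (2*s+2),
          (if i < 2*s+1 then 0 else if i = 2*s+1 then 1 else zeck N i) * fibF i
          = fibF (2*s+1) := by
        have hcg : ∀ i ∈ Finset.range (2*s+2),
            (if i < 2*s+1 then 0 else if i = 2*s+1 then 1 else zeck N i) * fibF i
            = (if i = 2*s+1 then fibF (2*s+1) else 0) := by
          intro i hi
          have hi' := Finset.mem_range.1 hi
          rcases Nat.lt_or_ge i (2*s+1) with h | h
          · rw [if_pos h, if_neg (by omega), zero_mul]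
          · have h3 : i = 2*s+1 := by omega
            subst h3
            rw [if_neg (by omega), if_pos rfl, if_pos rfl, one_mul]
        rw [Finset.sum_congr rfl hcg,
          Finset.sum_ite_eq' (Finset.range (2*s+2)) (2*s+1) (fun _ => fibF (2*s+1)),
          if_pos (Finset.mem_range.2 (by omega))]
      have hhi : ∑ i ∈ Finset.Ico (2*s+2) L,
          (if i < 2*s+1 then 0 else if i = 2*s+1 then 1 else zeck N i) * fibF i
          = ∑ i ∈ Finset.Ico (2*s+2) L, zeck N i * fibF i := by
        apply Finset.sum_congr rfl
        intro i hi
        have := (Finset.mem_Ico.1 hi).1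
        rw [if_neg (by omega), if_neg (by omega)]
      rw [hlo, hhi]
      have := hsplit (2*s+2) (by omega)
      omega
  -- digits of the backward targets
  have hback : ∀ m, 1 ≤ m → m ≤ s+1 →
      ∀ i, zeck (N+1-fibF (2*m-1)) i = if i < 2*m-1 then 0 else zeck N i := by
    intro m hm1 hm2
    apply zeck_unique (N+1-fibF (2*m-1)) (fun i => if i < 2*m-1 then 0 else zeck N i)
      ?_ ?_ L ?_ ?_
    · intro i
      split
      · omega
      · exact zeck_le_one N i
    · intro i
      by_cases h1 : i < 2*m-1
      · simp [h1]
      · rw [if_neg h1, if_neg (by omega)]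
        exact zeck_noconsec N i
    · intro i hi
      rw [if_neg (by omega)]
      exact zeck_eq_zero_of_lt N i (by omega)
    · show ∑ i ∈ Finset.range L,
        (if i < 2*m-1 then 0 else zeck N i) * fibF i = N+1-fibF (2*m-1)
      rw [← Finset.sum_range_add_sum_Ico _ (show 2*m-1 ≤ L by omega)]
      rw [Finset.sum_eq_zero (fun i hi => by
        rw [if_pos (Finset.mem_range.1 hi), zero_mul]), zero_add]
      rw [Finset.sum_congr rfl (fun i hi => by
        rw [if_neg (by have := (Finset.mem_Ico.1 hi).1; omega)])]
      have := hsplit (2*m-1) (by omega)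
      have := hlow m hm1 hm2
      omega
  -- product decompositions
  set W := ∏ i ∈ Finset.Ico (2*s+2) L, qF p lam i ^ zeck N i with hW
  have hIccRange : ∀ (g : ℕ → ℂ), ∏ j ∈ Finset.Icc 1 s, g j = ∏ i ∈ Finset.range s, g (i+1) := by
    intro g
    induction s with
    | zero => simp
    | succ t ih =>
      rw [Finset.prod_Icc_succ_top (by omega), ih, Finset.prod_range_succ]
  have hvN : vv p lam N
      = (qF p lam 0 * ∏ j ∈ Finset.Icc 1 s, qF p lam (2*j)) * W := by
    rw [vv_ext p lam (show N < L by omega),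
      ← Finset.prod_range_mul_prod_Ico _ (show 2*s+2 ≤ L by omega)]
    congr 1
    rw [show 2*s+2 = 2*(s+1) by ring, prod_pair]
    have hterm : ∀ j ∈ Finset.range (s+1),
        qF p lam (2*j) ^ zeck N (2*j) * qF p lam (2*j+1) ^ zeck N (2*j+1)
        = qF p lam (2*j) := by
      intro j hj
      have hj' : j ≤ s := by have := Finset.mem_range.1 hj; omega
      rw [heven j hj', hodd j hj', pow_zero, pow_one, mul_one]
    rw [Finset.prod_congr rfl hterm, Finset.prod_range_succ', hIccRange]
    rw [show 2*0 = 0 from rfl]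
    ring
  have hvfwd : vv p lam (N+1) = qF p lam (2*s+1) * W := by
    rw [vv_ext p lam (show N+1 < L by omega),
      ← Finset.prod_range_mul_prod_Ico _ (show 2*s+2 ≤ L by omega)]
    congr 1
    · rw [Finset.prod_congr rfl (fun i _ => by rw [hfwd i])]
      have hcg : ∀ i ∈ Finset.range (2*s+2),
          qF p lam i ^ (if i < 2*s+1 then 0 else if i = 2*s+1 then 1 else zeck N i)
          = (if i = 2*s+1 then qF p lam i else 1) := by
        intro i hi
        have hi' := Finset.mem_range.1 hi
        rcases Nat.lt_or_ge i (2*s+1) with h | h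
        · rw [if_pos h, pow_zero, if_neg (by omega)]
        · have h3 : i = 2*s+1 := by omega
          subst h3
          rw [if_neg (by omega), if_pos rfl, pow_one, if_pos rfl]
      rw [Finset.prod_congr rfl hcg,
        Finset.prod_ite_eq' (Finset.range (2*s+2)) (2*s+1) (qF p lam),
        if_pos (Finset.mem_range.2 (by omega))]
    · apply Finset.prod_congr rfl
      intro i hi
      have := (Finset.mem_Ico.1 hi).1
      rw [hfwd i, if_neg (by omega), if_neg (by omega)]
  have hvback : ∀ m, 1 ≤ m → m ≤ s+1 →
      vv p lam (N+1-fibF (2*m-1)) = (∏ j ∈ Finset.Icc m s, qF p lam (2*j)) * W := by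
    intro m hm1 hm2
    obtain ⟨m', rfl⟩ : ∃ m', m = m' + 1 := ⟨m-1, by omega⟩
    have hms : m' ≤ s := by omega
    rw [vv_ext p lam (show N+1-fibF (2*(m'+1)-1) < L by omega),
      ← Finset.prod_range_mul_prod_Ico _ (show 2*s+2 ≤ L by omega)]
    congr 1
    · rw [Finset.prod_congr rfl (fun i _ => by rw [hback (m'+1) hm1 hm2 i])]
      rw [show 2*(m'+1)-1 = 2*m'+1 by omega]
      rw [← Finset.prod_range_mul_prod_Ico _ (show 2*m'+1 ≤ 2*s+2 by omega),
        Finset.prod_eq_one (fun i hi => by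
          rw [if_pos (Finset.mem_range.1 hi), pow_zero]), one_mul,
        Finset.prod_eq_prod_Ico_succ_bot (show 2*m'+1 < 2*s+2 by omega),
        if_neg (by omega), hodd m' hms, pow_zero, one_mul,
        show 2*m'+1+1 = 2*(m'+1) by ring,
        show 2*s+2 = 2*((m'+1)+(s-m')) by omega,
        prod_pair_Ico, show (m'+1)+(s-m') = s+1 by omega,
        Finset.Ico_add_one_right_eq_Icc]
      apply Finset.prod_congr rfl
      intro j hj
      obtain ⟨hj1, hj2⟩ := Finset.mem_Icc.1 hj
      rw [if_neg (by omega), if_neg (by omega),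
        heven j hj2, hodd j hj2, pow_zero, pow_one, mul_one]
    · apply Finset.prod_congr rfl
      intro i hi
      have := (Finset.mem_Ico.1 hi).1
      rw [hback (m'+1) hm1 hm2 i, if_neg (by omega)]
  -- assemble
  have hp1 : p 1 ≠ 0 := ne_of_gt (hp 1 le_rfl).1
  have hlam := lam_eq p lam hp1
  have hG := identG p lam hp s
  rw [hvN, hvfwd,
    Finset.sum_congr rfl (fun m hm => by
      rw [hvback m (Finset.mem_Icc.1 hm).1 (Finset.mem_Icc.1 hm).2])]
  have hsum2 : ∑ m ∈ Finset.Icc 1 (s+1), ((Pprod p m * (1 - p (m+1)):ℝ):ℂ) *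
        ((∏ j ∈ Finset.Icc m s, qF p lam (2*j)) * W)
      = (∑ m ∈ Finset.Icc 1 (s+1), ((Pprod p m * (1 - p (m+1)):ℝ):ℂ) *
          ∏ j ∈ Finset.Icc m s, qF p lam (2*j)) * W := by
    rw [Finset.sum_mul]
    apply Finset.sum_congr rfl
    intro m _
    ring
  rw [hsum2]
  push_cast at hG ⊢
  linear_combination (-((qF p lam 0 * ∏ j ∈ Finset.Icc 1 s, qF p lam (2*j)) * W)) * hlam
    - W * hG

end

/-! ### the row sum of `Smat` against an arbitrary bounded family -/

lemma hasSum_piece (c : ℕ) (g : ℕ → ℂ) :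
    HasSum (fun j => if j = c then g j else 0) (g c) := by
  have he : (fun j => if j = c then g j else 0) = (fun j => if j = c then g c else 0) := by
    funext j
    rcases eq_or_ne j c with rfl | h
    · simp
    · simp [h]
  rw [he]
  exact hasSum_ite_eq c (g c)

lemma rowsum (p : ℕ → ℝ) (N : ℕ) (u : ℕ → ℂ) :
    ∑' j : ℕ, (Smat p N j : ℂ) * u j =
      ((1 - p 1:ℝ):ℂ) * u N +
      (if zeck N 0 = 0 then
        ((Pprod p (carryLen N + 1):ℝ):ℂ) * u (N+1) +
        ∑ m ∈ Finset.Icc 1 (carryLen N),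
          ((Pprod p m * (1 - p (m+1)):ℝ):ℂ) * u (N+1-fibF (2*m))
      else
        ((Pprod p (carryLen N + 2):ℝ):ℂ) * u (N+1) +
        ∑ m ∈ Finset.Icc 1 (carryLen N + 1),
          ((Pprod p m * (1 - p (m+1)):ℝ):ℂ) * u (N+1-fibF (2*m-1))) := by
  by_cases h0 : zeck N 0 = 0
  · rw [if_pos h0]
    have hfun : (fun j => (Smat p N j : ℂ) * u j) = fun j =>
        (if j = N then ((1 - p 1:ℝ):ℂ) * u j else 0) +
        ((if j = N+1 then ((Pprod p (carryLen N + 1):ℝ):ℂ) * u j else 0) +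
          ∑ m ∈ Finset.Icc 1 (carryLen N),
            (if j = N+1-fibF (2*m) then ((Pprod p m * (1 - p (m+1)):ℝ):ℂ) * u j else 0)) := by
      funext j
      rw [Smat, if_pos h0, Complex.ofReal_add, Complex.ofReal_add, add_mul, add_mul]
      congr 1
      · rcases eq_or_ne j N with rfl | h
        · simp
        · simp [h]
      congr 1
      · rcases eq_or_ne j (N+1) with rfl | h
        · simp
        · simp [h]
      · rw [Complex.ofReal_sum, Finset.sum_mul]
        apply Finset.sum_congr rfl
        intro m _
        rcases eq_or_ne j (N+1-fibF (2*m)) with rfl | h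
        · simp
        · simp [h]
    rw [hfun]
    exact ((hasSum_piece N _).add ((hasSum_piece (N+1) _).add
      (hasSum_sum (fun m _ => hasSum_piece (N+1-fibF (2*m)) _)))).tsum_eq
  · rw [if_neg h0]
    have hfun : (fun j => (Smat p N j : ℂ) * u j) = fun j =>
        (if j = N then ((1 - p 1:ℝ):ℂ) * u j else 0) +
        ((if j = N+1 then ((Pprod p (carryLen N + 2):ℝ):ℂ) * u j else 0) +
          ∑ m ∈ Finset.Icc 1 (carryLen N + 1),
            (if j = N+1-fibF (2*m-1) then ((Pprod p m * (1 - p (m+1)):ℝ):ℂ) * u j else 0)) := by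
      funext j
      rw [Smat, if_neg h0, Complex.ofReal_add, Complex.ofReal_add, add_mul, add_mul]
      congr 1
      · rcases eq_or_ne j N with rfl | h
        · simp
        · simp [h]
      congr 1
      · rcases eq_or_ne j (N+1) with rfl | h
        · simp
        · simp [h]
      · rw [Complex.ofReal_sum, Finset.sum_mul]
        apply Finset.sum_congr rfl
        intro m _
        rcases eq_or_ne j (N+1-fibF (2*m-1)) with rfl | h
        · simp
        · simp [h]
    rw [hfun]
    exact ((hasSum_piece N _).add ((hasSum_piece (N+1) _).add
      (hasSum_sum (fun m _ => hasSum_piece (N+1-fibF (2*m-1)) _)))).tsum_eq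

/-! ### escape lemmas: backward targets of far away rows stay far away (or hit 0) -/

lemma escape0 {N k m : ℕ} (h0 : zeck N 0 = 0) (hm1 : 1 ≤ m) (hm2 : m ≤ carryLen N)
    (hNk : fibF k ≤ N) :
    fibF k ≤ N+1-fibF (2*m) ∨ (m = carryLen N ∧ N+1-fibF (2*m) = 0) := by
  obtain ⟨hpat, he, ho⟩ := pattern0 h0
  set s := carryLen N with hs
  have hN0 : N ≠ 0 := by have := fibF_pos k; omega
  obtain ⟨ht1, ht2⟩ := ztop_spec hN0
  have hkt : k ≤ ztop N := by
    have : fibF k < fibF (ztop N + 1) := by omega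
    have := fibF_strictMono.lt_iff_lt.1 this
    omega
  set L := N + 2*s + 4 with hLdef
  -- bottom sum
  have hlow : ∀ m', m' ≤ s →
      (∑ i ∈ Finset.range (2*m'), zeck N i * fibF i) + 1 = fibF (2*m') := by
    intro m' hm'
    have h1 : ∑ i ∈ Finset.range (2*m'), zeck N i * fibF i
        = ∑ j ∈ Finset.range m', fibF (2*j+1) := by
      rw [sum_pair]
      apply Finset.sum_congr rfl
      intro j hj
      have hj' : j < s := lt_of_lt_of_le (Finset.mem_range.1 hj) hm'
      rw [(hpat j hj').1, (hpat j hj').2]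
      ring
    rw [h1, add_comm]
    exact fib_odd_sum m'
  have hfull : (∑ i ∈ Finset.range (2*s+2), zeck N i * fibF i) + 1 = fibF (2*s) := by
    rw [show (2*s+2:ℕ) = (2*s+1)+1 from rfl, Finset.sum_range_succ, ho, zero_mul, add_zero,
      Finset.sum_range_succ, he, zero_mul, add_zero]
    exact hlow s le_rfl
  have hsplit : (∑ i ∈ Finset.range (2*s+2), zeck N i * fibF i)
      + (∑ i ∈ Finset.Ico (2*s+2) L, zeck N i * fibF i) = N := by
    rw [Finset.sum_range_add_sum_Ico _ (show 2*s+2 ≤ L by omega)]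
    exact zeck_sum N L (by omega)
  set A := ∑ i ∈ Finset.Ico (2*s+2) L, zeck N i * fibF i with hA
  have hmono1 : fibF (2*m) ≤ fibF (2*s) := fibF_strictMono.monotone (by omega)
  rcases Nat.eq_zero_or_pos A with hA0 | hApos
  · -- N = fibF (2*s) - 1
    have hNval : N + 1 = fibF (2*s) := by omega
    rcases eq_or_ne m s with rfl | hne
    · right
      exact ⟨rfl, by omega⟩
    · left
      have hms : m ≤ s - 1 := by omega
      have h1 : fibF (2*m) ≤ fibF (2*s-2) := fibF_strictMono.monotone (by omega)
      have h2 : fibF (2*s) = fibF (2*s-1) + fibF (2*s-2) := by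
        rw [show 2*s = (2*s-2)+2 by omega, fibF_succ_succ]
        congr 2 <;> omega
      have h3 : fibF k ≤ fibF (2*s-1) := by
        apply fibF_strictMono.monotone
        have : fibF k < fibF (2*s) := by omega
        have := fibF_strictMono.lt_iff_lt.1 this
        omega
      omega
  · -- some digit at position ≥ 2*s+2
    left
    have hex : ∃ i ∈ Finset.Ico (2*s+2) L, zeck N i * fibF i ≠ 0 := by
      by_contra hcon
      push_neg at hcon
      exact absurd (Finset.sum_eq_zero hcon) (by omega)
    obtain ⟨i, hi, hiz⟩ := hex
    obtain ⟨hi1, hi2⟩ := Finset.mem_Ico.1 hi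
    have hzi : zeck N i ≠ 0 := by
      intro hz
      exact hiz (by rw [hz, zero_mul])
    have hit : i ≤ ztop N := by
      by_contra hcon
      push_neg at hcon
      exact hzi (zeck_zero_of_big N i (by
        have : fibF (ztop N + 1) ≤ fibF i := fibF_strictMono.monotone (by omega)
        omega))
    have htmem : ztop N ∈ Finset.Ico (2*s+2) L := by
      apply Finset.mem_Ico.2
      constructor
      · omega
      · have := Nat.findGreatest_le (n := N) (P := fun j => fibF j ≤ N)
        show ztop N < L
        have : ztop N ≤ N := Nat.findGreatest_le N
        omega
    have hzt : zeck N (ztop N) = 1 := by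
      rw [zeck_of_ne hN0, if_pos rfl]
    have hAget : fibF (ztop N) ≤ A := by
      rw [hA]
      calc fibF (ztop N) = zeck N (ztop N) * fibF (ztop N) := by rw [hzt, one_mul]
        _ ≤ _ := Finset.single_le_sum (f := fun i => zeck N i * fibF i)
            (fun i _ => Nat.zero_le _) htmem
    have hkA : fibF k ≤ A := le_trans (fibF_strictMono.monotone hkt) hAget
    omega

lemma escape1 {N k m : ℕ} (h0 : ¬ zeck N 0 = 0) (hm1 : 1 ≤ m) (hm2 : m ≤ carryLen N + 1)
    (hNk : fibF k ≤ N) :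
    fibF k ≤ N+1-fibF (2*m-1) ∨ (m = carryLen N + 1 ∧ N+1-fibF (2*m-1) = 0) := by
  obtain ⟨hz0, hpat, ho, he⟩ := pattern1 h0
  set s := carryLen N with hs
  have hN0 : N ≠ 0 := by have := fibF_pos k; omega
  obtain ⟨ht1, ht2⟩ := ztop_spec hN0
  have hkt : k ≤ ztop N := by
    have : fibF k < fibF (ztop N + 1) := by omega
    have := fibF_strictMono.lt_iff_lt.1 this
    omega
  set L := N + 2*s + 4 with hLdef
  have heven : ∀ j, j ≤ s → zeck N (2*j) = 1 := by
    intro j hj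
    rcases Nat.eq_zero_or_pos j with rfl | hjpos
    · simpa using hz0
    · have := (hpat (j-1) (by omega)).1
      rw [show 2*(j-1)+2 = 2*j by omega] at this
      exact this
  have hodd : ∀ j, j ≤ s → zeck N (2*j+1) = 0 := by
    intro j hj
    rcases eq_or_ne j s with rfl | hne
    · exact ho
    · exact (hpat j (by omega)).2
  have hlow : ∀ m', 1 ≤ m' → m' ≤ s+1 →
      (∑ i ∈ Finset.range (2*m'-1), zeck N i * fibF i) + 1 = fibF (2*m'-1) := by
    intro m' hm1' hm2'
    obtain ⟨m'', rfl⟩ : ∃ m'', m' = m'' + 1 := ⟨m'-1, by omega⟩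
    rw [show 2*(m''+1)-1 = 2*m''+1 by omega, Finset.sum_range_succ, sum_pair]
    have h1 : ∀ j ∈ Finset.range m'',
        zeck N (2*j) * fibF (2*j) + zeck N (2*j+1) * fibF (2*j+1) = fibF (2*j) := by
      intro j hj
      have hj' : j < m'' := Finset.mem_range.1 hj
      rw [heven j (by omega), hodd j (by omega)]
      ring
    rw [Finset.sum_congr rfl h1, heven m'' (by omega), one_mul]
    have h2 := fib_even_sum m''
    rw [Finset.sum_range_succ] at h2
    omega
  have hfull : (∑ i ∈ Finset.range (2*s+3), zeck N i * fibF i) + 1 = fibF (2*s+1) := by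
    rw [show (2*s+3:ℕ) = (2*s+2)+1 from rfl, Finset.sum_range_succ, he, zero_mul, add_zero,
      show (2*s+2:ℕ) = (2*s+1)+1 from rfl, Finset.sum_range_succ, hodd s le_rfl,
      zero_mul, add_zero]
    have h3 := hlow (s+1) (by omega) (by omega)
    rw [show 2*(s+1)-1 = 2*s+1 by omega] at h3
    exact h3
  have hsplit : (∑ i ∈ Finset.range (2*s+3), zeck N i * fibF i)
      + (∑ i ∈ Finset.Ico (2*s+3) L, zeck N i * fibF i) = N := by
    rw [Finset.sum_range_add_sum_Ico _ (show 2*s+3 ≤ L by omega)]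
    exact zeck_sum N L (by omega)
  set A := ∑ i ∈ Finset.Ico (2*s+3) L, zeck N i * fibF i with hA
  have hmono1 : fibF (2*m-1) ≤ fibF (2*s+1) := fibF_strictMono.monotone (by omega)
  rcases Nat.eq_zero_or_pos A with hA0 | hApos
  · have hNval : N + 1 = fibF (2*s+1) := by omega
    rcases eq_or_ne m (s+1) with rfl | hne
    · right
      refine ⟨rfl, ?_⟩
      have : 2*(s+1)-1 = 2*s+1 := by omega
      rw [this]
      omega
    · left
      have h1 : fibF (2*m-1) ≤ fibF (2*s-1) := fibF_strictMono.monotone (by omega)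
      have h2 : fibF (2*s+1) = fibF (2*s) + fibF (2*s-1) := by
        rw [show 2*s+1 = (2*s-1)+2 by omega, fibF_succ_succ]
        congr 2 <;> omega
      have h3 : fibF k ≤ fibF (2*s) := by
        apply fibF_strictMono.monotone
        have : fibF k < fibF (2*s+1) := by omega
        have := fibF_strictMono.lt_iff_lt.1 this
        omega
      omega
  · left
    have hex : ∃ i ∈ Finset.Ico (2*s+3) L, zeck N i * fibF i ≠ 0 := by
      by_contra hcon
      push_neg at hcon
      exact absurd (Finset.sum_eq_zero hcon) (by omega)
    obtain ⟨i, hi, hiz⟩ := hex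
    obtain ⟨hi1, hi2⟩ := Finset.mem_Ico.1 hi
    have hzi : zeck N i ≠ 0 := by
      intro hz
      exact hiz (by rw [hz, zero_mul])
    have hit : i ≤ ztop N := by
      by_contra hcon
      push_neg at hcon
      exact hzi (zeck_zero_of_big N i (by
        have : fibF (ztop N + 1) ≤ fibF i := fibF_strictMono.monotone (by omega)
        omega))
    have htmem : ztop N ∈ Finset.Ico (2*s+3) L := by
      apply Finset.mem_Ico.2
      have : ztop N ≤ N := Nat.findGreatest_le N
      omega
    have hzt : zeck N (ztop N) = 1 := by
      rw [zeck_of_ne hN0, if_pos rfl]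
    have hAget : fibF (ztop N) ≤ A := by
      rw [hA]
      calc fibF (ztop N) = zeck N (ztop N) * fibF (ztop N) := by rw [hzt, one_mul]
        _ ≤ _ := Finset.single_le_sum (f := fun i => zeck N i * fibF i)
            (fun i _ => Nat.zero_le _) htmem
    have hkA : fibF k ≤ A := le_trans (fibF_strictMono.monotone hkt) hAget
    omega

section
variable (p : ℕ → ℝ) (lam : ℂ) (hp : ∀ i, 1 ≤ i → 0 < p i ∧ p i ≤ 1)
include hp

lemma defect0 {i : ℕ} (h0 : zeck i 0 = 0) (a : ℂ) :
    ((1 - p 1:ℝ):ℂ) * (a * vv p lam i) +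
      (((Pprod p (carryLen i + 1):ℝ):ℂ) * (a * vv p lam (i+1)) +
       ∑ m ∈ Finset.Icc 1 (carryLen i),
         ((Pprod p m * (1 - p (m+1)):ℝ):ℂ) * (a * vv p lam (i+1-fibF (2*m))))
      - lam * (a * vv p lam i) = 0 := by
  have hrow := row_eq0 p lam hp h0
  have hmul : ∑ m ∈ Finset.Icc 1 (carryLen i),
      ((Pprod p m * (1 - p (m+1)):ℝ):ℂ) * (a * vv p lam (i+1-fibF (2*m)))
      = a * ∑ m ∈ Finset.Icc 1 (carryLen i),
          ((Pprod p m * (1 - p (m+1)):ℝ):ℂ) * vv p lam (i+1-fibF (2*m)) := by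
    rw [Finset.mul_sum]
    exact Finset.sum_congr rfl fun m _ => by ring
  rw [hmul]
  linear_combination a * hrow

lemma defect1 {i : ℕ} (h0 : ¬ zeck i 0 = 0) (a : ℂ) :
    ((1 - p 1:ℝ):ℂ) * (a * vv p lam i) +
      (((Pprod p (carryLen i + 2):ℝ):ℂ) * (a * vv p lam (i+1)) +
       ∑ m ∈ Finset.Icc 1 (carryLen i + 1),
         ((Pprod p m * (1 - p (m+1)):ℝ):ℂ) * (a * vv p lam (i+1-fibF (2*m-1))))
      - lam * (a * vv p lam i) = 0 := by
  have hrow := row_eq1 p lam hp h0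
  have hmul : ∑ m ∈ Finset.Icc 1 (carryLen i + 1),
      ((Pprod p m * (1 - p (m+1)):ℝ):ℂ) * (a * vv p lam (i+1-fibF (2*m-1)))
      = a * ∑ m ∈ Finset.Icc 1 (carryLen i + 1),
          ((Pprod p m * (1 - p (m+1)):ℝ):ℂ) * vv p lam (i+1-fibF (2*m-1)) := by
    rw [Finset.mul_sum]
    exact Finset.sum_congr rfl fun m _ => by ring
  rw [hmul]
  linear_combination a * hrow

end

theorem stmt10' (p : ℕ → ℝ) (hp : ∀ i, 1 ≤ i → 0 < p i ∧ p i ≤ 1)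
    (lam : ℂ) (hlam : lam ∈ Eset p) :
    ∃ u : ℕ → ℕ → ℂ,
      (∀ k, (∀ i, ‖u k i‖ ≤ 1) ∧ (⨆ i : ℕ, ‖u k i‖) = 1) ∧
      ∀ ε : ℝ, 0 < ε → ∃ K : ℕ, ∀ k, K ≤ k → ∀ i : ℕ,
        ‖(∑' j : ℕ, (Smat p i j : ℂ) * u k j) - lam * u k i‖ ≤ ε := by
  classical
  obtain ⟨C0, hC0⟩ := hlam
  set C := max C0 1 with hC
  have hC1 : (1:ℝ) ≤ C := le_max_right _ _
  have hCq : ∀ n, ‖qF p lam n‖ ≤ C := fun n => le_trans (hC0 n) (le_max_left _ _)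
  have hv0 : vv p lam 0 = 1 := vv_zero' p lam
  have hv0n : ‖vv p lam 0‖ = 1 := by rw [hv0, norm_one]
  by_cases hbdd : BddAbove (Set.range fun N => ‖vv p lam N‖)
  · -- bounded case: exact eigenvector
    set M := ⨆ N, ‖vv p lam N‖ with hM
    have hub : ∀ N, ‖vv p lam N‖ ≤ M := fun N => le_ciSup hbdd N
    have hM1 : (1:ℝ) ≤ M := hv0n ▸ hub 0
    have hMpos : (0:ℝ) < M := by linarith
    set a : ℂ := (((M:ℝ):ℂ))⁻¹ with ha
    have hna : ‖a‖ = M⁻¹ := by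
      rw [ha, norm_inv, Complex.norm_real, Real.norm_eq_abs, abs_of_pos hMpos]
    refine ⟨fun k N => a * vv p lam N, ?_, ?_⟩
    · intro k
      constructor
      · intro i
        rw [norm_mul, hna]
        calc M⁻¹ * ‖vv p lam i‖ ≤ M⁻¹ * M :=
              mul_le_mul_of_nonneg_left (hub i) (inv_nonneg.2 hMpos.le)
          _ = 1 := inv_mul_cancel₀ (ne_of_gt hMpos)
      · have hcalc : ∀ i : ℕ, ‖a * vv p lam i‖ = M⁻¹ * ‖vv p lam i‖ := fun i => by
          rw [norm_mul, hna]
        calc (⨆ i : ℕ, ‖a * vv p lam i‖) = ⨆ i : ℕ, M⁻¹ * ‖vv p lam i‖ := by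
              congr 1
              funext i
              exact hcalc i
          _ = M⁻¹ * ⨆ i : ℕ, ‖vv p lam i‖ :=
              (Real.mul_iSup_of_nonneg (inv_nonneg.2 hMpos.le) _).symm
          _ = 1 := inv_mul_cancel₀ (ne_of_gt hMpos)
    · intro ε hε
      refine ⟨0, fun k _ i => ?_⟩
      rw [rowsum]
      by_cases h0 : zeck i 0 = 0
      · rw [if_pos h0, defect0 p lam hp h0 a, norm_zero]
        exact hε.le
      · rw [if_neg h0, defect1 p lam hp h0 a, norm_zero]
        exact hε.le
  · -- unbounded case: truncations
    have hne : ∀ k, (Finset.range (fibF k)).Nonempty :=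
      fun k => Finset.nonempty_range_iff.2 (fibF_pos k).ne'
    set M : ℕ → ℝ := fun k => (Finset.range (fibF k)).sup' (hne k) (fun N => ‖vv p lam N‖)
      with hMdef
    have hMv : ∀ k N, N < fibF k → ‖vv p lam N‖ ≤ M k := by
      intro k N hN
      exact Finset.le_sup' (f := fun N => ‖vv p lam N‖) (Finset.mem_range.2 hN)
    have hM1 : ∀ k, (1:ℝ) ≤ M k := by
      intro k
      rw [← hv0n]
      exact hMv k 0 (fibF_pos k)
    have hMpos : ∀ k, (0:ℝ) < M k := fun k => lt_of_lt_of_le one_pos (hM1 k)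
    have hMmono : ∀ k k', k ≤ k' → M k ≤ M k' := by
      intro k k' hk
      apply Finset.sup'_le
      intro N hN
      exact hMv k' N (lt_of_lt_of_le (Finset.mem_range.1 hN)
        (fibF_strictMono.monotone hk))
    set u : ℕ → ℕ → ℂ := fun k N =>
      if N < fibF k then (((M k:ℝ):ℂ))⁻¹ * vv p lam N else 0 with hu
    have hna : ∀ k, ‖(((M k:ℝ):ℂ))⁻¹‖ = (M k)⁻¹ := fun k => by
      rw [norm_inv, Complex.norm_real, Real.norm_eq_abs, abs_of_pos (hMpos k)]
    have hule : ∀ k i, ‖u k i‖ ≤ 1 := by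
      intro k i
      rw [hu]
      dsimp only
      split
      · rename_i hik
        rw [norm_mul, hna]
        calc (M k)⁻¹ * ‖vv p lam i‖ ≤ (M k)⁻¹ * M k :=
              mul_le_mul_of_nonneg_left (hMv k i hik) (inv_nonneg.2 (hMpos k).le)
          _ = 1 := inv_mul_cancel₀ (ne_of_gt (hMpos k))
      · simp
    refine ⟨u, ?_, ?_⟩
    · intro k
      refine ⟨hule k, ?_⟩
      obtain ⟨N0, hN0mem, hN0⟩ := Finset.exists_mem_eq_sup' (hne k)
        (fun N => ‖vv p lam N‖)
      have hN0lt : N0 < fibF k := Finset.mem_range.1 hN0mem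
      have hMkN0 : M k = ‖vv p lam N0‖ := hN0
      have huN0 : ‖u k N0‖ = 1 := by
        rw [hu]
        dsimp only
        rw [if_pos hN0lt, norm_mul, hna, ← hMkN0]
        exact inv_mul_cancel₀ (ne_of_gt (hMpos k))
      apply le_antisymm
      · exact ciSup_le (fun i => hule k i)
      · rw [← huN0]
        have hbddu : BddAbove (Set.range fun i : ℕ => ‖u k i‖) :=
          ⟨1, by rintro x ⟨i, rfl⟩; exact hule k i⟩
        exact le_ciSup hbddu N0
    · intro ε hε
      obtain ⟨y, hy, hlt⟩ := not_bddAbove_iff.mp hbdd (C/ε)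
      obtain ⟨Nstar, rfl⟩ := hy
      have hMK : C/ε < M (Nstar+1) := by
        apply lt_of_lt_of_le hlt
        apply hMv
        have := fibF_ge (Nstar + 1)
        omega
      have hkey : ∀ k, Nstar+1 ≤ k → C * (M k)⁻¹ ≤ ε := by
        intro k hk
        have h1 : C/ε < M k := lt_of_lt_of_le hMK (hMmono (Nstar+1) k hk)
        rw [div_lt_iff₀ hε] at h1
        rw [← div_eq_mul_inv, div_le_iff₀ (hMpos k)]
        linarith
      refine ⟨Nstar+1, fun k hk i => ?_⟩
      have hb : (M k)⁻¹ ≤ ε := by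
        have := hkey k hk
        nlinarith [inv_nonneg.2 (hMpos k).le]
      set b : ℂ := (((M k:ℝ):ℂ))⁻¹ with hbdefn
      rw [rowsum]
      by_cases hik : fibF k ≤ i
      · -- far row
        have hui : u k i = 0 := by rw [hu]; exact if_neg (by omega)
        have hui1 : u k (i+1) = 0 := by rw [hu]; exact if_neg (by omega)
        by_cases h0 : zeck i 0 = 0
        · rw [if_pos h0, hui, hui1]
          simp only [mul_zero, zero_add, sub_zero]
          calc ‖∑ m ∈ Finset.Icc 1 (carryLen i),
                ((Pprod p m * (1 - p (m+1)):ℝ):ℂ) * u k (i+1-fibF (2*m))‖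
              ≤ ∑ m ∈ Finset.Icc 1 (carryLen i),
                ‖((Pprod p m * (1 - p (m+1)):ℝ):ℂ) * u k (i+1-fibF (2*m))‖ :=
                norm_sum_le _ _
            _ ≤ ∑ m ∈ Finset.Icc 1 (carryLen i),
                (if m = carryLen i then (M k)⁻¹ else 0) := by
                apply Finset.sum_le_sum
                intro m hm
                obtain ⟨hm1, hm2⟩ := Finset.mem_Icc.1 hm
                rcases escape0 h0 hm1 hm2 hik with hge | ⟨hms, hzero⟩
                · have : u k (i+1-fibF (2*m)) = 0 := by
                    rw [hu]; exact if_neg (by omega)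
                  rw [this, mul_zero, norm_zero]
                  split
                  · exact inv_nonneg.2 (hMpos k).le
                  · exact le_rfl
                · rw [hzero, hu]
                  dsimp only
                  rw [if_pos (fibF_pos k), hv0, mul_one, if_pos hms, norm_mul, hna,
                    Complex.norm_real, Real.norm_eq_abs]
                  have h2 := Pprod_nonneg hp m
                  have h3 := Pprod_le_one hp m
                  have h4 := (hp (m+1) (by omega)).1
                  have h5 := (hp (m+1) (by omega)).2
                  have hc0 : 0 ≤ Pprod p m * (1 - p (m+1)) := by nlinarith
                  have hc1 : Pprod p m * (1 - p (m+1)) ≤ 1 := by nlinarith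
                  rw [abs_of_nonneg hc0]
                  have h6 := inv_nonneg.2 (hMpos k).le
                  nlinarith
            _ ≤ (M k)⁻¹ := by
                rw [Finset.sum_ite_eq' (Finset.Icc 1 (carryLen i)) (carryLen i)
                  (fun _ => (M k)⁻¹)]
                split
                · exact le_rfl
                · exact inv_nonneg.2 (hMpos k).le
            _ ≤ ε := hb
        · rw [if_neg h0, hui, hui1]
          simp only [mul_zero, zero_add, sub_zero]
          calc ‖∑ m ∈ Finset.Icc 1 (carryLen i + 1),
                ((Pprod p m * (1 - p (m+1)):ℝ):ℂ) * u k (i+1-fibF (2*m-1))‖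
              ≤ ∑ m ∈ Finset.Icc 1 (carryLen i + 1),
                ‖((Pprod p m * (1 - p (m+1)):ℝ):ℂ) * u k (i+1-fibF (2*m-1))‖ :=
                norm_sum_le _ _
            _ ≤ ∑ m ∈ Finset.Icc 1 (carryLen i + 1),
                (if m = carryLen i + 1 then (M k)⁻¹ else 0) := by
                apply Finset.sum_le_sum
                intro m hm
                obtain ⟨hm1, hm2⟩ := Finset.mem_Icc.1 hm
                rcases escape1 h0 hm1 hm2 hik with hge | ⟨hms, hzero⟩
                · have : u k (i+1-fibF (2*m-1)) = 0 := by
                    rw [hu]; exact if_neg (by omega)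
                  rw [this, mul_zero, norm_zero]
                  split
                  · exact inv_nonneg.2 (hMpos k).le
                  · exact le_rfl
                · rw [hzero, hu]
                  dsimp only
                  rw [if_pos (fibF_pos k), hv0, mul_one, if_pos hms, norm_mul, hna,
                    Complex.norm_real, Real.norm_eq_abs]
                  have h2 := Pprod_nonneg hp m
                  have h3 := Pprod_le_one hp m
                  have h4 := (hp (m+1) (by omega)).1
                  have h5 := (hp (m+1) (by omega)).2
                  have hc0 : 0 ≤ Pprod p m * (1 - p (m+1)) := by nlinarith
                  have hc1 : Pprod p m * (1 - p (m+1)) ≤ 1 := by nlinarith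
                  rw [abs_of_nonneg hc0]
                  have h6 := inv_nonneg.2 (hMpos k).le
                  nlinarith
            _ ≤ (M k)⁻¹ := by
                rw [Finset.sum_ite_eq' (Finset.Icc 1 (carryLen i + 1)) (carryLen i + 1)
                  (fun _ => (M k)⁻¹)]
                split
                · exact le_rfl
                · exact inv_nonneg.2 (hMpos k).le
            _ ≤ ε := hb
      · push_neg at hik
        have hui : u k i = b * vv p lam i := by rw [hu]; exact if_pos hik
        have hsum0 : ∀ m, 1 ≤ m → u k (i+1-fibF (2*m)) = b * vv p lam (i+1-fibF (2*m)) := by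
          intro m hm
          rw [hu]
          have := fibF_pos (2*m)
          exact if_pos (by omega)
        have hsum1 : ∀ m, 1 ≤ m → u k (i+1-fibF (2*m-1)) = b * vv p lam (i+1-fibF (2*m-1)) := by
          intro m hm
          rw [hu]
          have := fibF_pos (2*m-1)
          exact if_pos (by omega)
        by_cases hi1 : i + 1 = fibF k
        · -- boundary row
          have hui1 : u k (i+1) = 0 := by rw [hu]; exact if_neg (by omega)
          by_cases h0 : zeck i 0 = 0
          · rw [if_pos h0, hui, hui1,
              Finset.sum_congr rfl (fun m hm => by
                rw [hsum0 m (Finset.mem_Icc.1 hm).1])]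
            have hdef := defect0 p lam hp h0 b
            have hX : ((1 - p 1:ℝ):ℂ) * (b * vv p lam i) +
                (((Pprod p (carryLen i + 1):ℝ):ℂ) * 0 +
                 ∑ m ∈ Finset.Icc 1 (carryLen i),
                   ((Pprod p m * (1 - p (m+1)):ℝ):ℂ) * (b * vv p lam (i+1-fibF (2*m))))
                - lam * (b * vv p lam i)
                = -(((Pprod p (carryLen i + 1):ℝ):ℂ) * (b * vv p lam (i+1))) := by
              linear_combination hdef
            rw [hX, hi1, vv_fibF, norm_neg, norm_mul, norm_mul, hna,
              Complex.norm_real, Real.norm_eq_abs, abs_of_nonneg (Pprod_nonneg hp _)]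
            calc Pprod p (carryLen i + 1) * ((M k)⁻¹ * ‖qF p lam k‖)
                ≤ 1 * ((M k)⁻¹ * C) := by
                  apply mul_le_mul (Pprod_le_one hp _)
                    (mul_le_mul_of_nonneg_left (hCq k) (inv_nonneg.2 (hMpos k).le))
                    (mul_nonneg (inv_nonneg.2 (hMpos k).le) (norm_nonneg _)) (by norm_num)
              _ = C * (M k)⁻¹ := by ring
              _ ≤ ε := hkey k hk
          · rw [if_neg h0, hui, hui1,
              Finset.sum_congr rfl (fun m hm => by
                rw [hsum1 m (Finset.mem_Icc.1 hm).1])]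
            have hdef := defect1 p lam hp h0 b
            have hX : ((1 - p 1:ℝ):ℂ) * (b * vv p lam i) +
                (((Pprod p (carryLen i + 2):ℝ):ℂ) * 0 +
                 ∑ m ∈ Finset.Icc 1 (carryLen i + 1),
                   ((Pprod p m * (1 - p (m+1)):ℝ):ℂ) * (b * vv p lam (i+1-fibF (2*m-1))))
                - lam * (b * vv p lam i)
                = -(((Pprod p (carryLen i + 2):ℝ):ℂ) * (b * vv p lam (i+1))) := by
              linear_combination hdef
            rw [hX, hi1, vv_fibF, norm_neg, norm_mul, norm_mul, hna,
              Complex.norm_real, Real.norm_eq_abs, abs_of_nonneg (Pprod_nonneg hp _)]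
            calc Pprod p (carryLen i + 2) * ((M k)⁻¹ * ‖qF p lam k‖)
                ≤ 1 * ((M k)⁻¹ * C) := by
                  apply mul_le_mul (Pprod_le_one hp _)
                    (mul_le_mul_of_nonneg_left (hCq k) (inv_nonneg.2 (hMpos k).le))
                    (mul_nonneg (inv_nonneg.2 (hMpos k).le) (norm_nonneg _)) (by norm_num)
              _ = C * (M k)⁻¹ := by ring
              _ ≤ ε := hkey k hk
        · -- interior row
          have hui1 : u k (i+1) = b * vv p lam (i+1) := by
            rw [hu]
            exact if_pos (by omega)
          by_cases h0 : zeck i 0 = 0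
          · rw [if_pos h0, hui, hui1,
              Finset.sum_congr rfl (fun m hm => by
                rw [hsum0 m (Finset.mem_Icc.1 hm).1]),
              defect0 p lam hp h0 b, norm_zero]
            exact hε.le
          · rw [if_neg h0, hui, hui1,
              Finset.sum_congr rfl (fun m hm => by
                rw [hsum1 m (Finset.mem_Icc.1 hm).1]),
              defect1 p lam hp h0 b, norm_zero]
            exact hε.le

/-- Every `λ ∈ E` is an approximate eigenvalue of `S` acting on
`ℓ∞(ℕ)`: there is a sequence `(u k)` of bounded sequences of sup-norm `1` with
`‖S (u k) - λ (u k)‖_∞ → 0` (i.e. for every `ε > 0`, eventually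
`‖(S (u k)) i - λ * u k i‖ ≤ ε` for all `i`). -/
theorem stmt10 (p : ℕ → ℝ) (hp : ∀ i, 1 ≤ i → 0 < p i ∧ p i ≤ 1)
    (lam : ℂ) (hlam : lam ∈ Eset p) :
    ∃ u : ℕ → ℕ → ℂ,
      (∀ k, (∀ i, ‖u k i‖ ≤ 1) ∧ (⨆ i : ℕ, ‖u k i‖) = 1) ∧
      ∀ ε : ℝ, 0 < ε → ∃ K : ℕ, ∀ k, K ≤ k → ∀ i : ℕ,
        ‖(∑' j : ℕ, (Smat p i j : ℂ) * u k j) - lam * u k i‖ ≤ ε := by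
  exact stmt10' p hp lam hlam
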